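/- Let F be a field, X a vector space over F, and g : F → X a function. Suppose the Cauchy difference C(x,y) = g(x+y) − g(x) − g(y) satisfies C(x, xy) = x·C(1, y) for all x, y ∈ F, and C(0,0) = 0. Then C is homogeneous: C(tx, ty) = t·C(x,y) for all t, x, y ∈ F. -/

import Mathlib

theorem stmt_5 {F X : Type*} [Field F] [AddCommGroup X] [Module F X]
    (g : F → X)
    (C : F → F → X) (hC : ∀ x y : F, C x y = g (x + y) - g x - g y)
    (h1 : ∀ x y : F, C x (x * y) = x • C 1 y)
    (h0 : C 0 0 = 0) :
    ∀ t x y : F, C (t * x) (t * y) = t • C x y := by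
  have hg0 : g 0 = 0 := by
    rw [hC] at h0
    simpa using h0
  have hc0 : ∀ z : F, C 0 z = 0 := by
    intro z
    rw [hC]
    simp [hg0]
  intro t x y
  by_cases hx : x = 0
  · subst hx
    simp [hc0]
  · have hy : x * (x⁻¹ * y) = y := by field_simp
    have h2 : C x y = x • C 1 (x⁻¹ * y) := by rw [← hy, h1, hy]
    have hty : (t * x) * (x⁻¹ * y) = t * y := by field_simp
    have h3 : C (t * x) (t * y) = (t * x) • C 1 (x⁻¹ * y) := by
      rw [← hty, h1]
    rw [h3, h2, mul_smul]
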